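/- The sets MTL^𝓘[n] for n ∈ ℤ, where 𝓘[n] = {m ∈ ℤ : m ≤ n} ∪ {−∞,+∞}, form a strictly increasing chain under expressive power: if n₁ < n₂ then every MTL^𝓘[n₁]-definable language is MTL^𝓘[n₂]-definable, and there is a language definable in MTL^𝓘[n₂] but not in MTL^𝓘[n₁]. -/

import Mathlib

/-- Integers extended with `-∞` (`⊥`) and `+∞` (`⊤`), used as interval endpoints. -/
abbrev ExtInt := WithBot (WithTop ℤ)

def ExtInt.ofInt (n : ℤ) : ExtInt := ((n : WithTop ℤ) : ExtInt)

/-- An interval of integers, given by two (possibly infinite) endpoints and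
openness flags. -/
structure Iv where
  lo : ExtInt
  hi : ExtInt
  loOpen : Bool
  hiOpen : Bool

/-- Membership of an integer in an interval. -/
def Iv.mem (I : Iv) (d : ℤ) : Prop :=
  (if I.loOpen then I.lo < ExtInt.ofInt d else I.lo ≤ ExtInt.ofInt d) ∧
  (if I.hiOpen then ExtInt.ofInt d < I.hi else ExtInt.ofInt d ≤ I.hi)

/-- The interval `(-∞, +∞)`. -/
def Iv.univ : Iv := ⟨⊥, ⊤, true, true⟩

/-- The singleton interval `[n, n]`. -/
def Iv.pt (n : ℤ) : Iv := ⟨ExtInt.ofInt n, ExtInt.ofInt n, false, false⟩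

/-- A data word: an infinite sequence of pairs of a set of propositions and a
natural number data value. -/
abbrev DataWord (P : Type) := ℕ → (Set P) × ℕ

/-- Syntax of MTL: atoms, negation, conjunction, and interval-constrained
strict until. -/
inductive MTL (P : Type) where
  | atom : P → MTL P
  | neg  : MTL P → MTL P
  | and  : MTL P → MTL P → MTL P
  | untl : MTL P → Iv → MTL P → MTL P

/-- Satisfaction of an MTL formula at position `i` of data word `w`. -/
def MTL.sat {P : Type} (w : DataWord P) : ℕ → MTL P → Prop
  | i, .atom p => p ∈ (w i).1
  | i, .neg φ => ¬ MTL.sat w i φ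
  | i, .and φ ψ => MTL.sat w i φ ∧ MTL.sat w i ψ
  | i, .untl φ I ψ => ∃ j, i < j ∧ MTL.sat w j ψ ∧
      I.mem (((w j).2 : ℤ) - ((w i).2 : ℤ)) ∧
      ∀ k, i < k → k < j → MTL.sat w k φ

/-- A data word satisfies an MTL formula if it holds at position `0`. -/
def MTL.models {P : Type} (w : DataWord P) (φ : MTL P) : Prop := MTL.sat w 0 φ

/-- The until rank of an MTL formula. -/
def MTL.urk {P : Type} : MTL P → ℕ
  | .atom _ => 0
  | .neg φ => φ.urk
  | .and φ ψ => max φ.urk ψ.urk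
  | .untl φ _ ψ => max φ.urk ψ.urk + 1

/-- All interval endpoints of until operators in the formula lie in `S`. -/
def MTL.endpointsIn {P : Type} : MTL P → Set ExtInt → Prop
  | .atom _, _ => True
  | .neg φ, S => φ.endpointsIn S
  | .and φ ψ, S => φ.endpointsIn S ∧ ψ.endpointsIn S
  | .untl φ I ψ, S => I.lo ∈ S ∧ I.hi ∈ S ∧ φ.endpointsIn S ∧ ψ.endpointsIn S

/-- The endpoint set `𝓘[n] = {m ∈ ℤ : m ≤ n} ∪ {-∞, +∞}`. -/
def Ichain (n : ℤ) : Set ExtInt :=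
  {e | e = ⊥ ∨ e = ⊤ ∨ ∃ m : ℤ, m ≤ n ∧ e = ExtInt.ofInt m}

/- ### Auxiliary material -/

lemma Ichain.mono {n₁ n₂ : ℤ} (h : n₁ ≤ n₂) : Ichain n₁ ⊆ Ichain n₂ := by
  rintro e (hb | ht | ⟨m, hm, he⟩)
  · exact Or.inl hb
  · exact Or.inr (Or.inl ht)
  · exact Or.inr (Or.inr ⟨m, le_trans hm h, he⟩)

lemma MTL.endpointsIn.mono {P : Type} {S T : Set ExtInt} (hST : S ⊆ T) :
    ∀ φ : MTL P, φ.endpointsIn S → φ.endpointsIn T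
  | .atom _, _ => trivial
  | .neg φ, h => MTL.endpointsIn.mono hST φ h
  | .and φ ψ, ⟨h1, h2⟩ => ⟨MTL.endpointsIn.mono hST φ h1, MTL.endpointsIn.mono hST ψ h2⟩
  | .untl φ _I ψ, ⟨h1, h2, h3, h4⟩ =>
      ⟨hST h1, hST h2, MTL.endpointsIn.mono hST φ h3, MTL.endpointsIn.mono hST ψ h4⟩

/-- For any `d > n₁`, membership of `d` in an interval with endpoints in
`Ichain n₁` only depends on whether the lower endpoint is not `+∞` and the
upper endpoint is `+∞`. -/
lemma mem_iff_aux {n₁ d : ℤ} (h : n₁ < d) (I : Iv)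
    (hlo : I.lo ∈ Ichain n₁) (hhi : I.hi ∈ Ichain n₁) :
    I.mem d ↔ (I.lo ≠ ⊤ ∧ I.hi = ⊤) := by
  unfold Iv.mem
  constructor
  · rintro ⟨h1, h2⟩
    constructor
    · rintro ht
      rw [ht] at h1
      cases hb : I.loOpen <;> rw [hb] at h1 <;> simp [ExtInt.ofInt] at h1
    · rcases hhi with hb | ht | ⟨m, hm, he⟩
      · rw [hb] at h2; cases hb2 : I.hiOpen <;> rw [hb2] at h2 <;>
          simp [ExtInt.ofInt] at h2
      · exact ht
      · exfalso; rw [he] at h2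
        have h1' : m < d := lt_of_le_of_lt hm h
        cases hb2 : I.hiOpen <;> rw [hb2] at h2 <;> simp [ExtInt.ofInt] at h2 <;> omega
  · rintro ⟨h1, h2⟩
    rw [h2]
    constructor
    · rcases hlo with hb | ht | ⟨m, hm, he⟩
      · rw [hb]; cases hb2 : I.loOpen <;> simp [ExtInt.ofInt]
      · exact absurd ht h1
      · rw [he]
        have h1' : m < d := lt_of_le_of_lt hm h
        cases hb2 : I.loOpen <;> simp [ExtInt.ofInt] <;> omega
    · cases hb2 : I.hiOpen <;> simp [ExtInt.ofInt, lt_top_iff_ne_top]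

/-- The data word with all propositions true, data value `x` at position `0`
and `y` everywhere else. -/
def wd (P : Type) (x y : ℕ) : DataWord P := fun i => (Set.univ, if i = 0 then x else y)

lemma wd_diff (P : Type) (x y : ℕ) {i j : ℕ} (hij : i < j) :
    ((wd P x y j).2 : ℤ) - ((wd P x y i).2 : ℤ) = if i = 0 then (y : ℤ) - x else 0 := by
  have hj : j ≠ 0 := by omega
  by_cases hi : i = 0 <;> simp [wd, hi, hj]

/-- Transfer lemma: two words of the above shape whose step differences are
equi-satisfiable for all relevant intervals satisfy the same formulas of the
fragment. -/
lemma transfer {P : Type} {n₁ : ℤ} (x y x' y' : ℕ)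
    (key : ∀ I : Iv, I.lo ∈ Ichain n₁ → I.hi ∈ Ichain n₁ →
      (I.mem ((y : ℤ) - x) ↔ I.mem ((y' : ℤ) - x'))) :
    ∀ φ : MTL P, φ.endpointsIn (Ichain n₁) → ∀ i,
      (MTL.sat (wd P x y) i φ ↔ MTL.sat (wd P x' y') i φ) := by
  intro φ
  induction φ with
  | atom p => intro _ i; simp [MTL.sat, wd]
  | neg φ ih => intro hE i; simp only [MTL.sat]; rw [ih hE i]
  | and φ ψ ihφ ihψ =>
      intro hE i; simp only [MTL.sat]; rw [ihφ hE.1 i, ihψ hE.2 i]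
  | untl φ I ψ ihφ ihψ =>
      rintro ⟨hlo, hhi, hφ, hψ⟩ i
      have hmem : ∀ j, i < j →
          (I.mem (((wd P x y j).2 : ℤ) - ((wd P x y i).2 : ℤ)) ↔
           I.mem (((wd P x' y' j).2 : ℤ) - ((wd P x' y' i).2 : ℤ))) := by
        intro j hij
        rw [wd_diff P x y hij, wd_diff P x' y' hij]
        by_cases hi : i = 0
        · simp only [hi, if_pos rfl]; exact key I hlo hhi
        · simp [hi]
      simp only [MTL.sat]
      constructor
      · rintro ⟨j, hij, hj, hm, hall⟩
        exact ⟨j, hij, (ihψ hψ j).mp hj, (hmem j hij).mp hm,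
          fun k hik hkj => (ihφ hφ k).mp (hall k hik hkj)⟩
      · rintro ⟨j, hij, hj, hm, hall⟩
        exact ⟨j, hij, (ihψ hψ j).mpr hj, (hmem j hij).mpr hm,
          fun k hik hkj => (ihφ hφ k).mpr (hall k hik hkj)⟩

/-- The fragments `MTL^{𝓘[n]}` form a strictly increasing chain in expressive
power. -/
theorem mtl_linear_constraint_hierarchy (P : Type) [Inhabited P]
    (n₁ n₂ : ℤ) (h : n₁ < n₂) :
    (∀ φ : MTL P, MTL.endpointsIn φ (Ichain n₁) →
        ∃ ψ : MTL P, MTL.endpointsIn ψ (Ichain n₂) ∧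
          ∀ w : DataWord P, MTL.models w φ ↔ MTL.models w ψ) ∧
    (∃ ψ : MTL P, MTL.endpointsIn ψ (Ichain n₂) ∧
        ¬ ∃ φ : MTL P, MTL.endpointsIn φ (Ichain n₁) ∧
          ∀ w : DataWord P, MTL.models w φ ↔ MTL.models w ψ) := by
  constructor
  · intro φ hφ
    exact ⟨φ, MTL.endpointsIn.mono (Ichain.mono h.le) φ hφ, fun w => Iff.rfl⟩
  · -- the separating formula: `⊤ U_{[n₂,n₂]} ⊤` (with `⊤` rendered as an atom)
    refine ⟨.untl (.atom default) (Iv.pt n₂) (.atom default), ?_, ?_⟩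
    · exact ⟨Or.inr (Or.inr ⟨n₂, le_refl _, rfl⟩),
        Or.inr (Or.inr ⟨n₂, le_refl _, rfl⟩), trivial, trivial⟩
    · rintro ⟨φ, hφE, hφ⟩
      -- two witnesses: step difference n₂ vs n₂ + 1
      set a : ℕ := (max 0 (-n₂)).toNat with ha
      set b : ℕ := (max 0 n₂).toNat with hb
      set a' : ℕ := (max 0 (-(n₂+1))).toNat with ha'
      set b' : ℕ := (max 0 (n₂+1)).toNat with hb'
      have hab : (b : ℤ) - a = n₂ := by
        have h1 : (a : ℤ) = max 0 (-n₂) := Int.toNat_of_nonneg (le_max_left _ _)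
        have h2 : (b : ℤ) = max 0 n₂ := Int.toNat_of_nonneg (le_max_left _ _)
        omega
      have hab' : (b' : ℤ) - a' = n₂ + 1 := by
        have h1 : (a' : ℤ) = max 0 (-(n₂+1)) := Int.toNat_of_nonneg (le_max_left _ _)
        have h2 : (b' : ℤ) = max 0 (n₂+1) := Int.toNat_of_nonneg (le_max_left _ _)
        omega
      -- the first word satisfies ψ
      have hw : MTL.models (wd P a b) (.untl (.atom default) (Iv.pt n₂) (.atom default)) := by
        refine ⟨1, one_pos, ?_, ?_, ?_⟩
        · simp [MTL.sat, wd]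
        · rw [wd_diff P a b one_pos]
          simp only [if_pos rfl, hab]
          exact ⟨le_refl _, le_refl _⟩
        · intro k hk1 hk2; omega
      -- the second word does not satisfy ψ
      have hw' : ¬ MTL.models (wd P a' b')
          (.untl (.atom default) (Iv.pt n₂) (.atom default)) := by
        rintro ⟨j, hj, _, hm, _⟩
        rw [wd_diff P a' b' hj] at hm
        have hm2 : (Iv.pt n₂).mem (n₂ + 1) := by simpa [hab'] using hm
        have h2 := hm2.2
        simp only [Iv.pt, Bool.false_eq_true, if_false] at h2
        rw [ExtInt.ofInt, ExtInt.ofInt, WithBot.coe_le_coe, WithTop.coe_le_coe] at h2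
        omega
      -- but φ cannot distinguish them
      have hkey : ∀ I : Iv, I.lo ∈ Ichain n₁ → I.hi ∈ Ichain n₁ →
          (I.mem ((b : ℤ) - a) ↔ I.mem ((b' : ℤ) - a')) := by
        intro I hlo hhi
        rw [hab, hab', mem_iff_aux h I hlo hhi,
          mem_iff_aux (show n₁ < n₂ + 1 by omega) I hlo hhi]
      have htr := transfer a b a' b' hkey φ hφE 0
      exact hw' ((hφ (wd P a' b')).mp (htr.mp ((hφ (wd P a b)).mpr hw)))
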